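/- Fix positive integers N, n, p, m_1, …, m_N, matrices A ∈ ℝ^{n×n}, B^j ∈ ℝ^{n×m_j}, C ∈ ℝ^{p×n}, D^j ∈ ℝ^{p×m_j}, symmetric Q^i ∈ ℝ^{p×p}, R^{ij} ∈ ℝ^{m_j×m_j}, and δ^i ∈ (0,1) for i, j ∈ {1,…,N}. Let K^{j*} ∈ ℝ^{m_j×n} with ‖A + Σ_j B^j K^{j*}‖₂ < 1, and for each j let (K^j(T))_{T∈ℕ} be a sequence of matrices in ℝ^{m_j×n} with K^j(T) → K^{j*} as T → ∞. For x₁ ∈ ℝ^n define J^i(x₁) := ½ Σ_{t=1}^∞ (δ^i)^{t−1} x₁^⊤ ((F^*)^{t−1})^⊤ [ (G^*)^⊤ Q^i G^* + Σ_j (K^{j*})^⊤ R^{ij} K^{j*} ] (F^*)^{t−1} x₁ with F^* = A + Σ_j B^j K^{j*}, G^* = C + Σ_j D^j K^{j*}; and for prediction horizons T¹, …, T^N define J̃^i(x₁; T¹,…,T^N) := ½ Σ_{t=1}^∞ (δ^i)^{t−1} x₁^⊤ (F̃^{t−1})^⊤ [ G̃^⊤ Q^i G̃ + Σ_j (K^j(T^j))^⊤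 R^{ij} K^j(T^j) ] F̃^{t−1} x₁ with F̃ = A + Σ_j B^j K^j(T^j), G̃ = C + Σ_j D^j K^j(T^j) (this series converges whenever ‖F̃‖₂ < 1, which holds for min_j T^j sufficiently large). Then for every i ∈ {1,…,N} and every x₁ ∈ ℝ^n: J̃^i(x₁; T¹,…,T^N) → J^i(x₁) as T_h := min_{j∈{1,…,N}} T^j → ∞. -/

import Mathlib

open Matrix BigOperators Filter Topology

/-- The spectral (operator 2-)norm of a real matrix. -/
noncomputable def sn {r c : ℕ} (A : Matrix (Fin r) (Fin c) ℝ) : ℝ :=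
  ‖LinearMap.toContinuousLinearMap (Matrix.toEuclideanLin A)‖

/-- Player `i`'s total discounted cost when each player `j` uses the constant linear
feedback gain `K j`:  `½ Σ_{t=1}^∞ δ^{t−1} x₁ᵀ (F^{t−1})ᵀ [GᵀQG + Σⱼ KʲᵀRⁱʲKʲ] F^{t−1} x₁`
with `F = A + Σⱼ BʲKʲ`, `G = C + Σⱼ DʲKʲ`. -/

lemma sn_nonneg {r c : ℕ} (A : Matrix (Fin r) (Fin c) ℝ) : 0 ≤ sn A := norm_nonneg _

lemma mulVec_norm_le {r c : ℕ} (M : Matrix (Fin r) (Fin c) ℝ) (v : Fin c → ℝ) :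
    ‖(WithLp.equiv 2 (Fin r → ℝ)).symm (M *ᵥ v)‖ ≤
      sn M * ‖(WithLp.equiv 2 (Fin c → ℝ)).symm v‖ := by
  have := (LinearMap.toContinuousLinearMap (Matrix.toEuclideanLin M)).le_opNorm
    ((WithLp.equiv 2 (Fin c → ℝ)).symm v)
  simpa [sn, WithLp.equiv_symm_apply, Matrix.toEuclideanLin_apply_piLp_toLp] using this

lemma toCLM_mul {a b c : ℕ} (M : Matrix (Fin a) (Fin b) ℝ) (P : Matrix (Fin b) (Fin c) ℝ) :
    LinearMap.toContinuousLinearMap (Matrix.toEuclideanLin (M * P)) =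
      (LinearMap.toContinuousLinearMap (Matrix.toEuclideanLin M)).comp
        (LinearMap.toContinuousLinearMap (Matrix.toEuclideanLin P)) := by
  ext x
  simp [Matrix.toEuclideanLin_apply, Matrix.mulVec_mulVec]

lemma sn_mul_le {a b c : ℕ} (M : Matrix (Fin a) (Fin b) ℝ) (P : Matrix (Fin b) (Fin c) ℝ) :
    sn (M * P) ≤ sn M * sn P := by
  rw [sn, toCLM_mul]; exact ContinuousLinearMap.opNorm_comp_le _ _

lemma sn_pow_le {a : ℕ} (M : Matrix (Fin a) (Fin a) ℝ) (t : ℕ) :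
    sn (M ^ t) ≤ sn M ^ t := by
  induction t with
  | zero =>
    have h : LinearMap.toContinuousLinearMap (Matrix.toEuclideanLin (1 : Matrix (Fin a) (Fin a) ℝ)) = ContinuousLinearMap.id ℝ _ := by
      ext x; simp [Matrix.toEuclideanLin_apply]
    rw [pow_zero, pow_zero]
    show ‖LinearMap.toContinuousLinearMap (Matrix.toEuclideanLin (1 : Matrix (Fin a) (Fin a) ℝ))‖ ≤ 1
    rw [h]
    exact ContinuousLinearMap.norm_id_le
  | succ t ih =>
    calc sn (M ^ (t+1)) = sn (M ^ t * M) := by rw [pow_succ]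
    _ ≤ sn (M ^ t) * sn M := sn_mul_le _ _
    _ ≤ sn M ^ t * sn M := by
        exact mul_le_mul_of_nonneg_right ih (sn_nonneg M)
    _ = sn M ^ (t+1) := by rw [pow_succ]

lemma sn_one_le {a : ℕ} (M : Matrix (Fin a) (Fin a) ℝ) : True := trivial

lemma sn_cont {r c : ℕ} : Continuous (sn : Matrix (Fin r) (Fin c) ℝ → ℝ) := by
  have h : Continuous (fun A : Matrix (Fin r) (Fin c) ℝ =>
      LinearMap.toContinuousLinearMap (Matrix.toEuclideanLin A)) :=
    LinearMap.continuous_of_finiteDimensional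
      (((LinearMap.toContinuousLinearMap :
          (EuclideanSpace ℝ (Fin c) →ₗ[ℝ] EuclideanSpace ℝ (Fin r)) ≃ₗ[ℝ] _) :
            _ ≃ₗ[ℝ] _).toLinearMap.comp
        (Matrix.toEuclideanLin :
          Matrix (Fin r) (Fin c) ℝ ≃ₗ[ℝ] _).toLinearMap)
  exact continuous_norm.comp h

lemma dot_bound {a : ℕ} (F M : Matrix (Fin a) (Fin a) ℝ) (x : Fin a → ℝ) (t : ℕ) :
    |x ⬝ᵥ (((F ^ t)ᵀ * M * F ^ t) *ᵥ x)| ≤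
      sn M * (sn F ^ t * ‖(WithLp.equiv 2 (Fin a → ℝ)).symm x‖) ^ 2 := by
  set u : Fin a → ℝ := F ^ t *ᵥ x with hu
  have h1 : ((F ^ t)ᵀ * M * F ^ t) *ᵥ x = (F ^ t)ᵀ *ᵥ (M *ᵥ u) := by
    rw [← Matrix.mulVec_mulVec, ← Matrix.mulVec_mulVec]
  have h2 : x ⬝ᵥ ((F ^ t)ᵀ *ᵥ (M *ᵥ u)) = u ⬝ᵥ (M *ᵥ u) := by
    rw [Matrix.dotProduct_mulVec, Matrix.vecMul_transpose]
  rw [h1, h2]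
  have h3 : u ⬝ᵥ (M *ᵥ u) =
      inner ℝ ((WithLp.equiv 2 (Fin a → ℝ)).symm u)
        ((WithLp.equiv 2 (Fin a → ℝ)).symm (M *ᵥ u)) := by
    simp [PiLp.inner_apply, dotProduct, RCLike.inner_apply, WithLp.equiv, Equiv.refl_apply]
    exact Finset.sum_congr rfl fun _ _ => mul_comm _ _
  rw [h3]
  have h4 := abs_real_inner_le_norm ((WithLp.equiv 2 (Fin a → ℝ)).symm u)
    ((WithLp.equiv 2 (Fin a → ℝ)).symm (M *ᵥ u))
  have h5 : ‖(WithLp.equiv 2 (Fin a → ℝ)).symm (M *ᵥ u)‖ ≤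
      sn M * ‖(WithLp.equiv 2 (Fin a → ℝ)).symm u‖ := mulVec_norm_le M u
  have h6 : ‖(WithLp.equiv 2 (Fin a → ℝ)).symm u‖ ≤
      sn F ^ t * ‖(WithLp.equiv 2 (Fin a → ℝ)).symm x‖ := by
    calc ‖(WithLp.equiv 2 (Fin a → ℝ)).symm u‖
        ≤ sn (F ^ t) * ‖(WithLp.equiv 2 (Fin a → ℝ)).symm x‖ := mulVec_norm_le (F ^ t) x
      _ ≤ sn F ^ t * ‖(WithLp.equiv 2 (Fin a → ℝ)).symm x‖ :=
          mul_le_mul_of_nonneg_right (sn_pow_le F t) (norm_nonneg _)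
  have hun : (0:ℝ) ≤ ‖(WithLp.equiv 2 (Fin a → ℝ)).symm u‖ := norm_nonneg _
  calc |inner ℝ ((WithLp.equiv 2 (Fin a → ℝ)).symm u) ((WithLp.equiv 2 (Fin a → ℝ)).symm (M *ᵥ u))|
      ≤ ‖(WithLp.equiv 2 (Fin a → ℝ)).symm u‖ * ‖(WithLp.equiv 2 (Fin a → ℝ)).symm (M *ᵥ u)‖ := h4
    _ ≤ ‖(WithLp.equiv 2 (Fin a → ℝ)).symm u‖ * (sn M * ‖(WithLp.equiv 2 (Fin a → ℝ)).symm u‖) :=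
        mul_le_mul_of_nonneg_left h5 hun
    _ = sn M * ‖(WithLp.equiv 2 (Fin a → ℝ)).symm u‖ ^ 2 := by ring
    _ ≤ sn M * (sn F ^ t * ‖(WithLp.equiv 2 (Fin a → ℝ)).symm x‖) ^ 2 :=
        mul_le_mul_of_nonneg_left (pow_le_pow_left₀ hun h6 2) (sn_nonneg M)

lemma cont_matrix_pow {X : Type*} [TopologicalSpace X] {a : ℕ}
    {F : X → Matrix (Fin a) (Fin a) ℝ} (h : Continuous F) (t : ℕ) :
    Continuous fun x => F x ^ t := by
  induction t with
  | zero => simpa [pow_zero] using continuous_const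
  | succ t ih => simpa [pow_succ] using ih.matrix_mul h


noncomputable def totalCost {N n p : ℕ} {m : Fin N → ℕ}
    (A : Matrix (Fin n) (Fin n) ℝ)
    (B : (j : Fin N) → Matrix (Fin n) (Fin (m j)) ℝ)
    (C : Matrix (Fin p) (Fin n) ℝ)
    (D : (j : Fin N) → Matrix (Fin p) (Fin (m j)) ℝ)
    (Qi : Matrix (Fin p) (Fin p) ℝ)
    (Ri : (j : Fin N) → Matrix (Fin (m j)) (Fin (m j)) ℝ)
    (δi : ℝ)
    (K : (j : Fin N) → Matrix (Fin (m j)) (Fin n) ℝ)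
    (x₁ : Fin n → ℝ) : ℝ :=
  (1 / 2) * ∑' t : ℕ, δi ^ t *
    (x₁ ⬝ᵥ (((A + ∑ j, B j * K j) ^ t)ᵀ *
      ((C + ∑ j, D j * K j)ᵀ * Qi * (C + ∑ j, D j * K j)
        + ∑ j, (K j)ᵀ * Ri j * K j) *
      (A + ∑ j, B j * K j) ^ t).mulVec x₁)

/-- Theorem 1, part 1: if each finite-horizon strategy gain `Kʲ(T)`
converges to the limiting FNE gain `K^{j*}` as `T → ∞`, and `‖A + Σⱼ BʲK^{j*}‖₂ < 1`,
then the total cost under the heterogeneous finite-horizon strategies converges to the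
cost under the limiting FNE as `T_h = minⱼ Tʲ → ∞` (i.e. along `atTop` on the tuple
`(T¹,…,Tᴺ)` of prediction horizons). -/
theorem stmt16 {N n p : ℕ} {m : Fin N → ℕ}
    (hN : 0 < N) (hn : 0 < n) (hp : 0 < p) (hm : ∀ j, 0 < m j)
    (A : Matrix (Fin n) (Fin n) ℝ)
    (B : (j : Fin N) → Matrix (Fin n) (Fin (m j)) ℝ)
    (C : Matrix (Fin p) (Fin n) ℝ)
    (D : (j : Fin N) → Matrix (Fin p) (Fin (m j)) ℝ)
    (Q : Fin N → Matrix (Fin p) (Fin p) ℝ)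
    (R : (i j : Fin N) → Matrix (Fin (m j)) (Fin (m j)) ℝ)
    (δ : Fin N → ℝ)
    (hQ : ∀ i, (Q i).IsSymm)
    (hR : ∀ i j, (R i j).IsSymm)
    (hδ : ∀ i, 0 < δ i ∧ δ i < 1)
    (Kstar : (j : Fin N) → Matrix (Fin (m j)) (Fin n) ℝ)
    (hstab : sn (A + ∑ j, B j * Kstar j) < 1)
    (K : (j : Fin N) → ℕ → Matrix (Fin (m j)) (Fin n) ℝ)
    (hconv : ∀ j, Tendsto (fun T => K j T) atTop (𝓝 (Kstar j))) :
    ∀ (i : Fin N) (x₁ : Fin n → ℝ),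
      Tendsto
        (fun Tv : Fin N → ℕ =>
          totalCost A B C D (Q i) (R i) (δ i) (fun j => K j (Tv j)) x₁)
        atTop
        (𝓝 (totalCost A B C D (Q i) (R i) (δ i) Kstar x₁)) := by
  intro i x₁
  obtain ⟨hδ0, hδ1⟩ := hδ i
  -- abbreviations
  set Fm : ((j : Fin N) → Matrix (Fin (m j)) (Fin n) ℝ) → Matrix (Fin n) (Fin n) ℝ :=
    fun Ks => A + ∑ j, B j * Ks j with hFm
  set Mm : ((j : Fin N) → Matrix (Fin (m j)) (Fin n) ℝ) → Matrix (Fin n) (Fin n) ℝ :=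
    fun Ks => (C + ∑ j, D j * Ks j)ᵀ * Q i * (C + ∑ j, D j * Ks j)
        + ∑ j, (Ks j)ᵀ * R i j * Ks j with hMm
  set f : ((j : Fin N) → Matrix (Fin (m j)) (Fin n) ℝ) → ℕ → ℝ :=
    fun Ks t => δ i ^ t * (x₁ ⬝ᵥ ((Fm Ks ^ t)ᵀ * Mm Ks * Fm Ks ^ t).mulVec x₁) with hf
  -- convergence of the gain tuple
  have hKs : Tendsto (fun Tv : Fin N → ℕ => (fun j => K j (Tv j))) atTop (𝓝 Kstar) := by
    rw [tendsto_pi_nhds]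
    intro j
    exact (hconv j).comp (tendsto_atTop_atTop.2 fun b => ⟨fun _ => b, fun a ha => ha j⟩)
  -- continuity of Fm, Mm
  have hFcont : Continuous Fm :=
    continuous_const.add (continuous_finset_sum _ fun j _ =>
      continuous_const.matrix_mul (continuous_apply j))
  have hGcont : Continuous (fun Ks : (j : Fin N) → Matrix (Fin (m j)) (Fin n) ℝ =>
      C + ∑ j, D j * Ks j) :=
    continuous_const.add (continuous_finset_sum _ fun j _ =>
      continuous_const.matrix_mul (continuous_apply j))
  have hMcont : Continuous Mm :=
    ((hGcont.matrix_transpose.matrix_mul continuous_const).matrix_mul hGcont).add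
      (continuous_finset_sum _ fun j _ =>
        (((continuous_apply j).matrix_transpose.matrix_mul continuous_const).matrix_mul
          (continuous_apply j)))
  -- termwise continuity
  have hfcont : ∀ t, Continuous (fun Ks => f Ks t) := by
    intro t
    apply continuous_const.mul
    exact continuous_const.dotProduct
      ((((cont_matrix_pow hFcont t).matrix_transpose.matrix_mul hMcont).matrix_mul
        (cont_matrix_pow hFcont t)).matrix_mulVec continuous_const)
  -- the dominating bound
  set ρ : ℝ := (1 + sn (Fm Kstar)) / 2 with hρ
  have hρ0 : 0 < ρ := by have := sn_nonneg (Fm Kstar); simp only [hρ]; linarith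
  have hρ1 : ρ < 1 := by simp only [hρ]; linarith
  have hsρ : sn (Fm Kstar) < ρ := by simp only [hρ]; linarith
  set Cm : ℝ := sn (Mm Kstar) + 1 with hCm
  set xn : ℝ := ‖(WithLp.equiv 2 (Fin n → ℝ)).symm x₁‖ with hxn
  set bound : ℕ → ℝ := fun t => Cm * xn ^ 2 * (δ i * ρ ^ 2) ^ t with hbound
  have hsum : Summable bound := by
    apply Summable.mul_left
    have hρ2a : (0:ℝ) ≤ ρ ^ 2 := sq_nonneg ρ
    have hρ2b : ρ ^ 2 < 1 := by nlinarith
    apply summable_geometric_of_lt_one (mul_nonneg hδ0.le hρ2a)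
    nlinarith
  -- eventual bounds
  have hFb : ∀ᶠ Tv : Fin N → ℕ in atTop, sn (Fm (fun j => K j (Tv j))) ≤ ρ := by
    have h := ((sn_cont.comp hFcont).tendsto Kstar).comp hKs
    filter_upwards [h.eventually_lt_const hsρ] with Tv h using le_of_lt h
  have hMb : ∀ᶠ Tv : Fin N → ℕ in atTop, sn (Mm (fun j => K j (Tv j))) ≤ Cm := by
    have h := ((sn_cont.comp hMcont).tendsto Kstar).comp hKs
    filter_upwards [h.eventually_lt_const (lt_add_one _)] with Tv h using le_of_lt h
  have h_bound : ∀ᶠ Tv : Fin N → ℕ in atTop, ∀ t, ‖f (fun j => K j (Tv j)) t‖ ≤ bound t := by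
    filter_upwards [hFb, hMb] with Tv h1 h2
    intro t
    set Ks := fun j => K j (Tv j)
    have hd := dot_bound (Fm Ks) (Mm Ks) x₁ t
    have hδt : (0:ℝ) ≤ δ i ^ t := le_of_lt (pow_pos hδ0 t)
    have hpow : sn (Fm Ks) ^ t ≤ ρ ^ t := pow_le_pow_left₀ (sn_nonneg _) h1 t
    have hsq : (sn (Fm Ks) ^ t * xn) ^ 2 ≤ (ρ ^ t * xn) ^ 2 := by
      apply pow_le_pow_left₀ (mul_nonneg (pow_nonneg (sn_nonneg _) t) (norm_nonneg _))
      exact mul_le_mul_of_nonneg_right hpow (norm_nonneg _)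
    have hMnn : (0:ℝ) ≤ sn (Mm Ks) := sn_nonneg _
    calc ‖f Ks t‖ = δ i ^ t * |x₁ ⬝ᵥ ((Fm Ks ^ t)ᵀ * Mm Ks * Fm Ks ^ t).mulVec x₁| := by
          simp only [hf]
          rw [Real.norm_eq_abs, abs_mul, abs_pow, abs_of_nonneg hδ0.le]
      _ ≤ δ i ^ t * (sn (Mm Ks) * (sn (Fm Ks) ^ t * xn) ^ 2) :=
          mul_le_mul_of_nonneg_left hd hδt
      _ ≤ δ i ^ t * (Cm * (ρ ^ t * xn) ^ 2) := by
          apply mul_le_mul_of_nonneg_left _ hδt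
          calc sn (Mm Ks) * (sn (Fm Ks) ^ t * xn) ^ 2
              ≤ sn (Mm Ks) * (ρ ^ t * xn) ^ 2 := mul_le_mul_of_nonneg_left hsq hMnn
            _ ≤ Cm * (ρ ^ t * xn) ^ 2 := by
                apply mul_le_mul_of_nonneg_right (by rw [hCm]; linarith) (by positivity)
      _ = bound t := by
          have hrw : (δ i * ρ ^ 2) ^ t = δ i ^ t * (ρ ^ t) ^ 2 := by
            rw [mul_pow, ← pow_mul, ← pow_mul, Nat.mul_comm]
          rw [hbound]
          simp only [hrw]
          ring
  -- termwise convergence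
  have hterm : ∀ t, Tendsto (fun Tv : Fin N → ℕ => f (fun j => K j (Tv j)) t) atTop
      (𝓝 (f Kstar t)) :=
    fun t => ((hfcont t).tendsto Kstar).comp hKs
  have hmain := tendsto_tsum_of_dominated_convergence hsum hterm h_bound
  have : ∀ Ks : (j : Fin N) → Matrix (Fin (m j)) (Fin n) ℝ,
      totalCost A B C D (Q i) (R i) (δ i) Ks x₁ = (1/2 : ℝ) * ∑' t, f Ks t := fun _ => rfl
  simp only [this]
  exact hmain.const_mul _
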